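/- Let (V, q) be a nondegenerate quadratic space over a field of characteristic zero with dim V ≥ 2, and for n ≥ 2 define the Laplacian Δ : Symⁿ(V) → Sym^{n-2}(V) on pure tensors by Δ(v₁⋯vₙ) = Σ_{i<j} b(vᵢ,vⱼ)·v₁⋯v̂ᵢ⋯v̂ⱼ⋯vₙ, where b is the bilinear form of q. Then Δ is surjective. -/

import Mathlib

open MvPolynomial

open Finset in
section
open MvPolynomial Finset

namespace Stmt8Aux

variable {k : Type*} [Field k] [CharZero k] {d : ℕ}

lemma pderiv_isHomogeneous {m : ℕ} {p : MvPolynomial (Fin d) k} (h : p.IsHomogeneous m)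
    (i : Fin d) : (pderiv i p).IsHomogeneous (m - 1) := by
  classical
  conv_lhs => rw [← p.support_sum_monomial_coeff, map_sum]
  apply IsHomogeneous.sum
  intro s hs
  rw [pderiv_monomial]
  by_cases hsi : s i = 0
  · simp [hsi]
    exact isHomogeneous_zero _ _ _
  · apply isHomogeneous_monomial
    have hdeg : s.degree = m := by
      by_contra hne
      exact (mem_support_iff.mp hs) (h.coeff_eq_zero hne)
    have hle : Finsupp.single i 1 ≤ s := by
      rw [Finsupp.single_le_iff]; omega
    have : (s - Finsupp.single i 1) + Finsupp.single i 1 = s := tsub_add_cancel_of_le hle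
    have hd1 : (s - Finsupp.single i 1).degree + (Finsupp.single i 1).degree = s.degree := by
      rw [← this]
      simp [Finsupp.degree_eq_weight_one, map_add]
    have hsing : (Finsupp.single i (1:ℕ)).degree = 1 := by
      simp [Finsupp.degree_eq_weight_one, Finsupp.weight_apply, Finsupp.sum_single_index]
    omega

lemma pderiv_eq_zero_of_isHomogeneous_zero {p : MvPolynomial (Fin d) k}
    (h : p.IsHomogeneous 0) (i : Fin d) : pderiv i p = 0 := by
  classical
  conv_lhs => rw [← p.support_sum_monomial_coeff, map_sum]
  apply Finset.sum_eq_zero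
  intro s hs
  have hdeg : s.degree = 0 := by
    by_contra hne
    exact (mem_support_iff.mp hs) (h.coeff_eq_zero hne)
  have hs0 : s = 0 := (Finsupp.degree_eq_zero_iff s).mp hdeg
  simp [hs0, pderiv_monomial]

lemma euler {m : ℕ} {p : MvPolynomial (Fin d) k} (h : p.IsHomogeneous m) :
    ∑ i : Fin d, X i * pderiv i p = m • p := by
  classical
  conv_lhs => rw [← p.support_sum_monomial_coeff]
  conv_rhs => rw [← p.support_sum_monomial_coeff]
  simp_rw [map_sum, Finset.mul_sum, Finset.smul_sum]
  rw [Finset.sum_comm]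
  apply Finset.sum_congr rfl
  intro s hs
  have hdeg : s.degree = m := by
    by_contra hne
    exact (mem_support_iff.mp hs) (h.coeff_eq_zero hne)
  set a := coeff s p with ha
  have step : ∀ i : Fin d, X i * pderiv i (monomial s a) = monomial s (a * s i) := by
    intro i
    rw [pderiv_monomial]
    by_cases hsi : s i = 0
    · simp [hsi]
    · have hle : Finsupp.single i 1 ≤ s := by rw [Finsupp.single_le_iff]; omega
      rw [X, monomial_mul, one_mul, add_tsub_cancel_of_le hle]
  simp_rw [step]
  rw [← map_sum (monomial s), ← Finset.mul_sum]
  have : ∑ i : Fin d, s i = m := by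
    rw [← hdeg, Finsupp.degree]
    exact (Finset.sum_subset (Finset.subset_univ _) (by
      intro x _ hx
      simpa using Finsupp.notMem_support_iff.mp hx)).symm
  rw [← Nat.cast_sum, this, ← Nat.cast_smul_eq_nsmul k, ← (monomial s).map_smul, smul_eq_mul,
    mul_comm]
set_option linter.unusedSectionVars false

variable (M g : Matrix (Fin d) (Fin d) k)

/-- The Laplacian as a linear map. -/
noncomputable def lapL : MvPolynomial (Fin d) k →ₗ[k] MvPolynomial (Fin d) k :=
  ((1:k)/2) • ∑ i : Fin d, ∑ j : Fin d,
    M i j • ((pderiv i).toLinearMap ∘ₗ (pderiv j).toLinearMap)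

lemma lapL_apply (p : MvPolynomial (Fin d) k) :
    lapL M p = ((1:k)/2) • ∑ i : Fin d, ∑ j : Fin d, M i j • pderiv i (pderiv j p) := by
  simp [lapL, LinearMap.sum_apply]

lemma lapL_isHomogeneous {m : ℕ} {p : MvPolynomial (Fin d) k} (h : p.IsHomogeneous m) :
    (lapL M p).IsHomogeneous (m - 2) := by
  rw [← mem_homogeneousSubmodule, lapL_apply]
  apply Submodule.smul_mem
  apply Submodule.sum_mem
  intro i _
  apply Submodule.sum_mem
  intro j _
  apply Submodule.smul_mem
  rw [mem_homogeneousSubmodule]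
  have := pderiv_isHomogeneous (pderiv_isHomogeneous h j) i
  rwa [show m - 1 - 1 = m - 2 by omega] at this

lemma lapL_eq_zero {m : ℕ} {p : MvPolynomial (Fin d) k} (h : p.IsHomogeneous m)
    (hm : m ≤ 1) : lapL M p = 0 := by
  rw [lapL_apply]
  have : ∀ i j : Fin d, pderiv i (pderiv j p) = 0 := by
    intro i j
    have h1 : (pderiv j p).IsHomogeneous 0 := by
      have := pderiv_isHomogeneous h j
      rwa [show m - 1 = 0 by omega] at this
    exact pderiv_eq_zero_of_isHomogeneous_zero h1 i
  simp [this]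

/-- The linear form `ℓ_a = ∑_b g_{ab} X_b`. -/
noncomputable def ell (a : Fin d) : MvPolynomial (Fin d) k := ∑ b : Fin d, C (g a b) * X b

/-- The quadratic form `r = ∑ g_{ab} X_a X_b`. -/
noncomputable def rpol : MvPolynomial (Fin d) k :=
  ∑ a : Fin d, ∑ b : Fin d, C (g a b) * (X a * X b)

lemma rpol_isHomogeneous : (rpol g).IsHomogeneous 2 := by
  apply IsHomogeneous.sum
  intro a _
  apply IsHomogeneous.sum
  intro b _
  have : (0:ℕ) + (1 + 1) = 2 := rfl
  exact this ▸ (isHomogeneous_C _ _).mul ((isHomogeneous_X _ _).mul (isHomogeneous_X _ _))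

lemma pderiv_ell (i a : Fin d) : pderiv i (ell g a) = C (g a i) := by
  classical
  rw [ell, map_sum]
  simp_rw [pderiv_C_mul, pderiv_X, Pi.single_apply]
  simp [Finset.sum_ite_eq']

lemma pderiv_rpol (hg : ∀ a b, g a b = g b a) (i : Fin d) :
    pderiv i (rpol g) = 2 * ell g i := by
  classical
  rw [rpol, map_sum]
  simp_rw [map_sum, pderiv_C_mul, pderiv_mul, pderiv_X, Pi.single_apply]
  simp only [mul_add, Finset.sum_add_distrib, ite_mul, one_mul, zero_mul, mul_ite, mul_one,
    mul_zero]
  rw [Finset.sum_comm (γ := Fin d)]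
  simp [Finset.sum_ite_eq', Finset.sum_ite_eq, ell, two_mul, Finset.sum_add_distrib]
  apply Finset.sum_congr rfl
  intro b _
  rw [hg]
lemma ell_sum (hMg : M * g = 1) (i : Fin d) :
    ∑ j : Fin d, M i j • ell g j = X i := by
  classical
  simp_rw [ell, Finset.smul_sum, smul_eq_C_mul, ← mul_assoc, ← C_mul]
  rw [Finset.sum_comm]
  have : ∀ b : Fin d, ∑ j : Fin d, C (M i j * g j b) * X b
      = C ((1 : Matrix (Fin d) (Fin d) k) i b) * X b := by
    intro b
    rw [← hMg, Matrix.mul_apply, ← Finset.sum_mul, ← map_sum]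
  simp_rw [this, Matrix.one_apply, apply_ite C, ite_mul, C_1, C_0, one_mul, zero_mul]
  simp

lemma lap_mul (hM : ∀ a b, M a b = M b a) (hg : ∀ a b, g a b = g b a)
    (hMg : M * g = 1) {e : ℕ} {p : MvPolynomial (Fin d) k} (hp : p.IsHomogeneous e) :
    lapL M (rpol g * p) = rpol g * lapL M p + ((d + 2*e : ℕ) : k) • p := by
  classical
  have hC2 : (C (2:k) : MvPolynomial (Fin d) k) = 2 := map_ofNat _ 2
  have expand : ∀ i j : Fin d, pderiv i (pderiv j (rpol g * p)) =
      2 * C (g j i) * p + (2 * ell g j) * pderiv i p + (2 * ell g i) * pderiv j p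
        + rpol g * pderiv i (pderiv j p) := by
    intro i j
    rw [pderiv_mul, map_add, pderiv_mul, pderiv_mul, pderiv_rpol g hg, pderiv_rpol g hg]
    have h2C : pderiv i (2 * ell g j) = 2 * C (g j i) := by
      rw [← hC2, pderiv_C_mul, pderiv_ell]
    rw [h2C]
    ring
  rw [lapL_apply]
  simp_rw [expand, smul_add, Finset.sum_add_distrib]
  have h1 : ∑ i : Fin d, ∑ j : Fin d, M i j • (2 * C (g j i) * p)
      = ((2*d : ℕ) : k) • p := by
    have step : ∀ i j : Fin d, M i j • (2 * C (g j i) * p) = (M i j * (2 * g j i)) • p := by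
      intro i j
      rw [← hC2, ← C_mul, ← smul_eq_C_mul, smul_smul]
    simp_rw [step, ← Finset.sum_smul]
    congr 1
    have : ∀ i : Fin d, ∑ j : Fin d, M i j * (2 * g j i) = 2 * (M * g) i i := by
      intro i
      rw [Matrix.mul_apply, Finset.mul_sum]
      apply Finset.sum_congr rfl
      intros; ring
    simp_rw [this, hMg, Matrix.one_apply_eq]
    simp [Finset.card_univ]
    push_cast
    ring
  have hstep2 : ∀ (N : Matrix (Fin d) (Fin d) k), N * g = 1 →
      ∀ (q : Fin d → MvPolynomial (Fin d) k),
      ∑ i : Fin d, ∑ j : Fin d, N i j • (2 * ell g j * q i)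
        = 2 * ∑ i : Fin d, X i * q i := by
    intro N hNg q
    have step : ∀ i : Fin d, ∑ j : Fin d, N i j • (2 * ell g j * q i)
        = 2 * (X i * q i) := by
      intro i
      calc ∑ j : Fin d, N i j • (2 * ell g j * q i)
          = (∑ j : Fin d, 2 * (N i j • ell g j)) * q i := by
            rw [Finset.sum_mul]
            apply Finset.sum_congr rfl
            intro j _
            rw [← smul_mul_assoc, mul_smul_comm]
        _ = 2 * (X i * q i) := by
            rw [← Finset.mul_sum, ell_sum N g hNg, mul_assoc]
    rw [Finset.sum_congr rfl (fun i _ => step i), ← Finset.mul_sum]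
  have h2 : ∑ i : Fin d, ∑ j : Fin d, M i j • (2 * ell g j * pderiv i p)
      = ((2*e : ℕ) : k) • p := by
    rw [hstep2 M hMg (fun i => pderiv i p), euler hp, Nat.cast_smul_eq_nsmul,
      nsmul_eq_mul, nsmul_eq_mul]
    push_cast
    ring
  have h3 : ∑ i : Fin d, ∑ j : Fin d, M i j • (2 * ell g i * pderiv j p)
      = ((2*e : ℕ) : k) • p := by
    rw [Finset.sum_comm]
    have swap : ∀ j i : Fin d, M i j • (2 * ell g i * pderiv j p)
        = M j i • (2 * ell g i * pderiv j p) := by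
      intro j i; rw [hM i j]
    have swap2 : ∀ j : Fin d, ∑ i : Fin d, M i j • (2 * ell g i * pderiv j p)
        = ∑ i : Fin d, M j i • (2 * ell g i * pderiv j p) :=
      fun j => Finset.sum_congr rfl (fun i _ => swap j i)
    rw [Finset.sum_congr rfl (fun j _ => swap2 j)]
    rw [hstep2 M hMg (fun j => pderiv j p), euler hp, Nat.cast_smul_eq_nsmul,
      nsmul_eq_mul, nsmul_eq_mul]
    push_cast
    ring
  have h4 : ∑ i : Fin d, ∑ j : Fin d, M i j • (rpol g * pderiv i (pderiv j p))
      = rpol g * ∑ i : Fin d, ∑ j : Fin d, M i j • pderiv i (pderiv j p) := by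
    simp_rw [← mul_smul_comm, ← Finset.mul_sum]
  rw [h1, h2, h3, h4, lapL_apply, mul_smul_comm]
  push_cast
  module
lemma lap_pow_mul (hM : ∀ a b, M a b = M b a) (hg : ∀ a b, g a b = g b a)
    (hMg : M * g = 1) : ∀ (j e : ℕ) (p : MvPolynomial (Fin d) k), p.IsHomogeneous e →
    lapL M (rpol g ^ (j+1) * p) = rpol g ^ (j+1) * lapL M p
      + (((j+1) * (d + 2*e + 2*j) : ℕ) : k) • (rpol g ^ j * p) := by
  intro j
  induction j with
  | zero =>
    intro e p hp
    simpa using lap_mul M g hM hg hMg hp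
  | succ j IH =>
    intro e p hp
    have hhom : (rpol g ^ (j+1) * p).IsHomogeneous (2*(j+1) + e) :=
      ((rpol_isHomogeneous g).pow (j+1)).mul hp
    rw [show rpol g ^ (j+1+1) * p = rpol g * (rpol g ^ (j+1) * p) by
      rw [← mul_assoc, ← pow_succ']]
    rw [lap_mul M g hM hg hMg hhom, IH e p hp, mul_add, ← mul_assoc, ← pow_succ',
      mul_smul_comm,
      show rpol g * (rpol g ^ j * p) = rpol g ^ (j+1) * p by rw [← mul_assoc, ← pow_succ'],
      add_assoc, ← add_smul]
    congr 2
    push_cast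
    ring
lemma main_ind (hM : ∀ a b, M a b = M b a) (hg : ∀ a b, g a b = g b a)
    (hMg : M * g = 1) (hd : 2 ≤ d) :
    ∀ e : ℕ, ∀ j : ℕ, ∀ q : MvPolynomial (Fin d) k, q.IsHomogeneous e →
    ∃ p : MvPolynomial (Fin d) k,
      p.IsHomogeneous (e + 2*j + 2) ∧ lapL M p = rpol g ^ j * q := by
  intro e
  induction e using Nat.strong_induction_on with
  | _ e IH =>
  intro j q hq
  have hc : (((j+1) * (d + 2*e + 2*j) : ℕ) : k) ≠ 0 :=
    Nat.cast_ne_zero.mpr (Nat.mul_ne_zero (by omega) (by omega))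
  set c : k := (((j+1) * (d + 2*e + 2*j) : ℕ) : k) with hcdef
  have hpowhom : (rpol g ^ (j+1) * q).IsHomogeneous (e + 2*j + 2) := by
    have := ((rpol_isHomogeneous g).pow (j+1)).mul hq
    rwa [show 2*(j+1) + e = e + 2*j + 2 by ring] at this
  by_cases he : e ≤ 1
  · have hq0 : lapL M q = 0 := lapL_eq_zero M hq he
    refine ⟨c⁻¹ • (rpol g ^ (j+1) * q), ?_, ?_⟩
    · rw [← mem_homogeneousSubmodule]
      exact Submodule.smul_mem _ _ ((mem_homogeneousSubmodule _ _).mpr hpowhom)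
    · rw [map_smul, lap_pow_mul M g hM hg hMg j e q hq, hq0, mul_zero, zero_add,
        ← hcdef, smul_smul, inv_mul_cancel₀ hc, one_smul]
  · have hq' : (lapL M q).IsHomogeneous (e - 2) := lapL_isHomogeneous M hq
    obtain ⟨w, hw, hwl⟩ := IH (e - 2) (by omega) (j+1) (lapL M q) hq'
    rw [show (e-2) + 2*(j+1) + 2 = e + 2*j + 2 by omega] at hw
    refine ⟨c⁻¹ • (rpol g ^ (j+1) * q - w), ?_, ?_⟩
    · rw [← mem_homogeneousSubmodule]
      exact Submodule.smul_mem _ _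
        ((mem_homogeneousSubmodule _ _).mpr (hpowhom.sub hw))
    · rw [map_smul, map_sub, lap_pow_mul M g hM hg hMg j e q hq, hwl, ← hcdef,
        add_sub_cancel_left, smul_smul, inv_mul_cancel₀ hc, one_smul]

end Stmt8Aux
end

open Stmt8Aux in
/-- Surjectivity of the Laplacian `Δ : Symⁿ(V) → Sym^{n-2}(V)` of a nondegenerate
quadratic space of dimension `d ≥ 2` over a field of characteristic zero, in the
polynomial model `Symⁿ(k^d) = ` homogeneous polynomials of degree `n`, where
`Δ = ½ Σ_{i,j} b(eᵢ,eⱼ) ∂ᵢ∂ⱼ`. -/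
theorem stmt_8 {k : Type*} [Field k] [CharZero k] (d n : ℕ) (hd : 2 ≤ d) (hn : 2 ≤ n)
    (B : LinearMap.BilinForm k (Fin d → k)) (hB : B.Nondegenerate)
    (hsymm : ∀ x y, B x y = B y x) :
    ∀ q ∈ homogeneousSubmodule (Fin d) k (n - 2),
      ∃ p ∈ homogeneousSubmodule (Fin d) k n,
        ((1 : k) / 2) • ∑ i : Fin d, ∑ j : Fin d,
            B (Pi.single i 1) (Pi.single j 1) • pderiv i (pderiv j p) = q := by
  classical
  intro q hq
  set M : Matrix (Fin d) (Fin d) k := LinearMap.BilinForm.toMatrix' B with hMdef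
  have hMapp : ∀ i j, M i j = B (Pi.single i 1) (Pi.single j 1) := fun i j =>
    LinearMap.BilinForm.toMatrix'_apply B i j
  have hMsymm : ∀ a b, M a b = M b a := by
    intro a b; rw [hMapp, hMapp, hsymm]
  have hdet : IsUnit M.det := by
    rw [isUnit_iff_ne_zero, ← Matrix.nondegenerate_iff_det_ne_zero]
    exact hB.toMatrix'
  set g : Matrix (Fin d) (Fin d) k := M⁻¹ with hgdef
  have hMg : M * g = 1 := Matrix.mul_nonsing_inv M hdet
  have hMT : M.transpose = M := by
    ext a b; rw [Matrix.transpose_apply]; exact hMsymm b a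
  have hgsymm : ∀ a b, g a b = g b a := by
    intro a b
    have hgt : g.transpose = g := by rw [hgdef, Matrix.transpose_nonsing_inv, hMT]
    have h2 := congrFun (congrFun hgt b) a
    rw [Matrix.transpose_apply] at h2
    exact h2
  obtain ⟨p, hp, hlp⟩ := main_ind M g hMsymm hgsymm hMg hd (n - 2) 0 q
    ((mem_homogeneousSubmodule _ _).mp hq)
  rw [show (n-2) + 2*0 + 2 = n by omega] at hp
  refine ⟨p, (mem_homogeneousSubmodule _ _).mpr hp, ?_⟩
  rw [pow_zero, one_mul] at hlp
  rw [← hlp, lapL_apply]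
  simp_rw [hMapp]
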